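/- For a Young diagram λ with n boxes, the number of standard Young tableaux satisfies Σ_{μ = λ + □} f^μ = (n+1) · f^λ, where the sum runs over all Young diagrams μ obtained from λ by adding one box. -/
import Mathlib

open Finset YoungDiagram

namespace Stmt9

instance : DecidableEq YoungDiagram := fun μ ν =>
  decidable_of_iff (μ.cells = ν.cells) (by rw [YoungDiagram.ext_iff])


open scoped Classical in
/-- Add a box at the end of row `i` (junk value if not a lower set). -/
noncomputable def addBox (μ : YoungDiagram) (i : ℕ) : YoungDiagram :=
  if h : IsLowerSet (↑(insert (i, μ.rowLen i) μ.cells) : Set (ℕ × ℕ)) then ⟨_, h⟩ else μ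

open scoped Classical in
/-- Erase the last box of row `i` (junk value if not a lower set). -/
noncomputable def eraseBox (μ : YoungDiagram) (i : ℕ) : YoungDiagram :=
  if h : IsLowerSet (↑(μ.cells.erase (i, μ.rowLen i - 1)) : Set (ℕ × ℕ)) then ⟨_, h⟩ else μ

theorem addBox_cells {μ : YoungDiagram} {i : ℕ} (h : i = 0 ∨ μ.rowLen i < μ.rowLen (i - 1)) :
    (addBox μ i).cells = insert (i, μ.rowLen i) μ.cells := by
  have hls : IsLowerSet (↑(insert (i, μ.rowLen i) μ.cells) : Set (ℕ × ℕ)) := by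
    intro x y hyx hx
    obtain ⟨y1, y2⟩ := y
    simp only [Finset.coe_insert, Set.mem_insert_iff, Finset.mem_coe, mem_cells] at hx ⊢
    rcases hx with rfl | hx
    · rw [Prod.mk_le_mk] at hyx
      obtain ⟨hy1, hy2⟩ := hyx
      rcases lt_or_eq_of_le hy2 with hd | rfl
      · right; exact mem_iff_lt_rowLen.mpr (lt_of_lt_of_le hd (μ.rowLen_anti _ _ hy1))
      · rcases lt_or_eq_of_le hy1 with hc | rfl
        · right
          rcases h with rfl | h
          · omega
          · refine mem_iff_lt_rowLen.mpr (lt_of_lt_of_le h (μ.rowLen_anti _ _ (by omega)))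
        · left; rfl
    · right; exact μ.isLowerSet hyx hx
  rw [addBox, dif_pos hls]

theorem eraseBox_cells {μ : YoungDiagram} {i : ℕ} (h : μ.rowLen (i + 1) < μ.rowLen i) :
    (eraseBox μ i).cells = μ.cells.erase (i, μ.rowLen i - 1) := by
  have hls : IsLowerSet (↑(μ.cells.erase (i, μ.rowLen i - 1)) : Set (ℕ × ℕ)) := by
    intro x y hyx hx
    obtain ⟨x1, x2⟩ := x
    simp only [Finset.coe_erase, Set.mem_diff, Finset.mem_coe, mem_cells,
      Set.mem_singleton_iff] at hx ⊢
    obtain ⟨hxμ, hxne⟩ := hx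
    refine ⟨μ.isLowerSet hyx hxμ, ?_⟩
    rintro rfl
    rw [Prod.mk_le_mk] at hyx
    obtain ⟨hy1, hy2⟩ := hyx
    have hab : x2 < μ.rowLen x1 := mem_iff_lt_rowLen.mp hxμ
    have h1 : μ.rowLen x1 ≤ μ.rowLen i := μ.rowLen_anti _ _ hy1
    rcases eq_or_lt_of_le hy1 with rfl | hlt
    · exact hxne (by rw [Prod.mk.injEq]; omega)
    · have : μ.rowLen x1 ≤ μ.rowLen (i + 1) := μ.rowLen_anti _ _ hlt
      omega
  rw [eraseBox, dif_pos hls]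

/-- Rows at which a box can be added. -/
def Af (l : YoungDiagram) : Finset ℕ :=
  (Finset.range (l.colLen 0 + 1)).filter fun i => i = 0 ∨ l.rowLen i < l.rowLen (i - 1)

/-- Rows from which a box can be removed. -/
def Rf (l : YoungDiagram) : Finset ℕ :=
  (Finset.range (l.colLen 0 + 1)).filter fun i => l.rowLen (i + 1) < l.rowLen i

theorem corner_notMem (l : YoungDiagram) (i : ℕ) : (i, l.rowLen i) ∉ l := by
  rw [mem_iff_lt_rowLen]; omega

theorem above_char (l μ : YoungDiagram) :
    (l ≤ μ ∧ μ.card = l.card + 1) ↔ ∃ i ∈ Af l, addBox l i = μ := by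
  constructor
  · rintro ⟨hle, hcard⟩
    have hcard' : μ.cells.card = l.cells.card + 1 := hcard
    have hsd : (μ.cells \ l.cells).card = 1 := by
      rw [Finset.card_sdiff_of_subset hle]; omega
    obtain ⟨c, hc⟩ := Finset.card_eq_one.mp hsd
    have hcμ : c ∈ μ.cells := (Finset.mem_sdiff.mp (hc ▸ Finset.mem_singleton_self c)).1
    have hcl : c ∉ l.cells := (Finset.mem_sdiff.mp (hc ▸ Finset.mem_singleton_self c)).2
    have hcells : μ.cells = insert c l.cells := by
      ext x
      simp only [Finset.mem_insert]
      constructor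
      · intro hx
        by_cases hxl : x ∈ l.cells
        · exact Or.inr hxl
        · left
          have : x ∈ μ.cells \ l.cells := Finset.mem_sdiff.mpr ⟨hx, hxl⟩
          rwa [hc, Finset.mem_singleton] at this
      · rintro (rfl | hx)
        · exact hcμ
        · exact hle hx
    obtain ⟨i, j⟩ := c
    -- j = rowLen l i
    have hj1 : l.rowLen i ≤ j := by
      by_contra hcon
      exact hcl (mem_iff_lt_rowLen.mpr (by omega))
    have hj2 : j ≤ l.rowLen i := by
      by_contra hcon
      push_neg at hcon
      have hmem : (i, l.rowLen i) ∈ μ := μ.up_left_mem le_rfl (le_of_lt hcon) hcμ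
      have : (i, l.rowLen i) ∈ l.cells := by
        rw [← mem_cells, hcells, Finset.mem_insert] at hmem
        rcases hmem with h' | h'
        · exfalso; rw [Prod.mk.injEq] at h'; omega
        · exact h'
      exact corner_notMem l i this
    have hj : j = l.rowLen i := le_antisymm hj2 hj1
    subst hj
    -- addable
    have haddable : i = 0 ∨ l.rowLen i < l.rowLen (i - 1) := by
      by_cases hi : i = 0
      · exact Or.inl hi
      · right
        have hmem : (i - 1, l.rowLen i) ∈ μ := μ.up_left_mem (by omega) le_rfl hcμ
        have : (i - 1, l.rowLen i) ∈ l.cells := by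
          rw [← mem_cells, hcells, Finset.mem_insert] at hmem
          rcases hmem with h' | h'
          · exfalso; rw [Prod.mk.injEq] at h'; omega
          · exact h'
        exact mem_iff_lt_rowLen.mp this
    refine ⟨i, ?_, ?_⟩
    · rw [Af, Finset.mem_filter, Finset.mem_range]
      refine ⟨?_, haddable⟩
      by_cases hi : i = 0
      · omega
      · rcases haddable with h' | h'
        · omega
        · have : (i - 1, 0) ∈ l := mem_iff_lt_rowLen.mpr (by omega)
          have := mem_iff_lt_colLen.mp this
          omega
    · refine YoungDiagram.ext ?_
      rw [addBox_cells haddable, hcells]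
  · rintro ⟨i, hi, rfl⟩
    rw [Af, Finset.mem_filter] at hi
    have hcells := addBox_cells hi.2
    constructor
    · rw [← cells_subset_iff, hcells]
      exact Finset.subset_insert _ _
    · show (addBox l i).cells.card = l.cells.card + 1
      rw [hcells, Finset.card_insert_of_notMem (corner_notMem l i)]

theorem below_char (l ν : YoungDiagram) :
    (ν ≤ l ∧ l.card = ν.card + 1) ↔ ∃ i ∈ Rf l, eraseBox l i = ν := by
  constructor
  · rintro ⟨hle, hcard⟩
    have hcard' : l.cells.card = ν.cells.card + 1 := hcard
    have hsd : (l.cells \ ν.cells).card = 1 := by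
      rw [Finset.card_sdiff_of_subset hle]; omega
    obtain ⟨c, hc⟩ := Finset.card_eq_one.mp hsd
    have hcl : c ∈ l.cells := (Finset.mem_sdiff.mp (hc ▸ Finset.mem_singleton_self c)).1
    have hcν : c ∉ ν.cells := (Finset.mem_sdiff.mp (hc ▸ Finset.mem_singleton_self c)).2
    have hcells : ν.cells = l.cells.erase c := by
      ext x
      rw [Finset.mem_erase]
      constructor
      · intro hx
        refine ⟨fun h => hcν (h ▸ hx), hle hx⟩
      · rintro ⟨hne, hx⟩
        by_contra hxν
        have : x ∈ l.cells \ ν.cells := Finset.mem_sdiff.mpr ⟨hx, hxν⟩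
        rw [hc, Finset.mem_singleton] at this
        exact hne this
    obtain ⟨i, j⟩ := c
    have hjlt : j < l.rowLen i := mem_iff_lt_rowLen.mp hcl
    have hrow : l.rowLen i = j + 1 := by
      by_contra hcon
      have h1 : (i, j + 1) ∈ l := mem_iff_lt_rowLen.mpr (by omega)
      have h2 : (i, j + 1) ∈ ν.cells := by
        rw [hcells, Finset.mem_erase]
        exact ⟨fun hh => by rw [Prod.mk.injEq] at hh; omega, h1⟩
      have : (i, j) ∈ ν.cells := ν.up_left_mem le_rfl (by omega) h2
      exact hcν this
    have hrem : l.rowLen (i + 1) < l.rowLen i := by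
      rw [hrow]
      have : l.rowLen (i + 1) ≤ j := by
        by_contra hcon
        have h1 : (i + 1, j) ∈ l := mem_iff_lt_rowLen.mpr (by omega)
        have h2 : (i + 1, j) ∈ ν.cells := by
          rw [hcells, Finset.mem_erase]
          exact ⟨fun hh => by rw [Prod.mk.injEq] at hh; omega, h1⟩
        exact hcν (ν.up_left_mem (by omega) le_rfl h2)
      omega
    refine ⟨i, ?_, ?_⟩
    · rw [Rf, Finset.mem_filter, Finset.mem_range]
      refine ⟨?_, hrem⟩
      have : (i, 0) ∈ l := mem_iff_lt_rowLen.mpr (by omega)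
      have := mem_iff_lt_colLen.mp this
      omega
    · refine YoungDiagram.ext ?_
      rw [eraseBox_cells hrem, hcells, hrow]
      norm_num
  · rintro ⟨i, hi, rfl⟩
    rw [Rf, Finset.mem_filter] at hi
    have hrem := hi.2
    have hcells := eraseBox_cells hrem
    have hcmem : (i, l.rowLen i - 1) ∈ l.cells := mem_iff_lt_rowLen.mpr (by omega)
    constructor
    · rw [← cells_subset_iff, hcells]
      exact Finset.erase_subset _ _
    · show l.cells.card = (eraseBox l i).cells.card + 1
      rw [hcells, Finset.card_erase_of_mem hcmem]
      have : 0 < l.cells.card := Finset.card_pos.mpr ⟨_, hcmem⟩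
      omega

theorem Af_eq (l : YoungDiagram) : Af l = insert 0 ((Rf l).image (· + 1)) := by
  ext a
  simp only [Af, Rf, Finset.mem_insert, Finset.mem_image, Finset.mem_filter, Finset.mem_range]
  constructor
  · rintro ⟨hr, rfl | hlt⟩
    · exact Or.inl rfl
    · rcases Nat.eq_zero_or_pos a with rfl | ha
      · exact Or.inl rfl
      · exact Or.inr ⟨a - 1, ⟨by omega, by rwa [show a - 1 + 1 = a by omega]⟩, by omega⟩
  · rintro (rfl | ⟨i, ⟨hir, hlt⟩, rfl⟩)
    · exact ⟨by omega, Or.inl rfl⟩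
    · refine ⟨?_, Or.inr (by simpa using hlt)⟩
      have : (i, 0) ∈ l := mem_iff_lt_rowLen.mpr (by omega)
      have := mem_iff_lt_colLen.mp this
      omega

theorem card_Af (l : YoungDiagram) : (Af l).card = (Rf l).card + 1 := by
  rw [Af_eq, Finset.card_insert_of_notMem, Finset.card_image_of_injective _ (add_left_injective 1)]
  simp

theorem addBox_injOn (l : YoungDiagram) : Set.InjOn (addBox l) (Af l) := by
  intro i hi j hj heq
  rw [Finset.mem_coe, Af, Finset.mem_filter] at hi hj
  have h1 := addBox_cells hi.2
  have h2 := addBox_cells hj.2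
  have : (i, l.rowLen i) ∈ insert ((j : ℕ), l.rowLen j) l.cells := by
    rw [← h2, ← heq, h1]
    exact Finset.mem_insert_self _ _
  rw [Finset.mem_insert] at this
  rcases this with h | h
  · exact congrArg Prod.fst h
  · exact absurd h (corner_notMem l i)

theorem eraseBox_injOn (l : YoungDiagram) : Set.InjOn (eraseBox l) (Rf l) := by
  intro i hi j hj heq
  rw [Finset.mem_coe, Rf, Finset.mem_filter] at hi hj
  have h1 := eraseBox_cells hi.2
  have h2 := eraseBox_cells hj.2
  by_contra hne
  have hcij : (i, l.rowLen i - 1) ≠ ((j : ℕ), l.rowLen j - 1) := by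
    intro h; exact hne (congrArg Prod.fst h)
  have hmem : (i, l.rowLen i - 1) ∈ l.cells := mem_iff_lt_rowLen.mpr (by omega)
  have : (i, l.rowLen i - 1) ∈ l.cells.erase ((j : ℕ), l.rowLen j - 1) :=
    Finset.mem_erase.mpr ⟨hcij, hmem⟩
  rw [← h2, ← heq, h1] at this
  exact (Finset.mem_erase.mp this).1 rfl



theorem eq_of_le_card {μ ν : YoungDiagram} (h : μ ≤ ν) (hc : ν.card ≤ μ.card) : μ = ν :=
  YoungDiagram.ext (Finset.eq_of_subset_of_card_le h hc)

theorem card_sup_add_card_inf (μ ν : YoungDiagram) :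
    (μ ⊔ ν).card + (μ ⊓ ν).card = μ.card + ν.card := by
  show (μ.cells ∪ ν.cells).card + (μ.cells ∩ ν.cells).card = _
  exact Finset.card_union_add_card_inter _ _

theorem pairF {l μ ν : YoungDiagram} (h1 : l ≤ μ) (h2 : μ.card = l.card + 1)
    (h3 : ν ≤ μ) (h4 : μ.card = ν.card + 1) (hne : ν ≠ l) :
    ((l ⊓ ν ≤ l ∧ l.card = (l ⊓ ν).card + 1) ∧ (l ⊓ ν ≤ ν ∧ ν.card = (l ⊓ ν).card + 1))
      ∧ l ⊔ ν = μ := by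
  have hsle : l ⊔ ν ≤ μ := sup_le h1 h3
  have hsne : l ⊔ ν ≠ l := by
    intro h
    exact hne (eq_of_le_card (le_sup_right.trans h.le) (by omega))
  have hlt : l.card < (l ⊔ ν).card := by
    refine Finset.card_lt_card ?_
    rw [Finset.ssubset_iff_subset_ne]
    exact ⟨le_sup_left, fun h => hsne (YoungDiagram.ext h.symm)⟩
  have hle' : (l ⊔ ν).card ≤ μ.card := Finset.card_le_card hsle
  have hsupμ : l ⊔ ν = μ := eq_of_le_card hsle (by omega)
  have hcs := card_sup_add_card_inf l ν
  rw [hsupμ] at hcs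
  exact ⟨⟨⟨inf_le_left, by omega⟩, ⟨inf_le_right, by omega⟩⟩, hsupμ⟩

theorem pairB {l ρ ν : YoungDiagram} (h1 : ρ ≤ l) (h2 : l.card = ρ.card + 1)
    (h3 : ρ ≤ ν) (h4 : ν.card = ρ.card + 1) (hne : ν ≠ l) :
    ((l ≤ l ⊔ ν ∧ (l ⊔ ν).card = l.card + 1) ∧ (ν ≤ l ⊔ ν ∧ (l ⊔ ν).card = ν.card + 1))
      ∧ l ⊓ ν = ρ := by
  have hρle : ρ ≤ l ⊓ ν := le_inf h1 h3
  have hine : l ⊓ ν ≠ l := by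
    intro h
    exact hne (eq_of_le_card (h ▸ inf_le_right) (by omega)).symm
  have hlt : (l ⊓ ν).card < l.card := by
    refine Finset.card_lt_card ?_
    rw [Finset.ssubset_iff_subset_ne]
    exact ⟨inf_le_left, fun h => hine (YoungDiagram.ext h)⟩
  have hge : ρ.card ≤ (l ⊓ ν).card := Finset.card_le_card hρle
  have hinfρ : l ⊓ ν = ρ := (eq_of_le_card hρle (by omega)).symm
  have hcs := card_sup_add_card_inf l ν
  rw [hinfρ] at hcs
  exact ⟨⟨⟨le_sup_left, by omega⟩, ⟨le_sup_right, by omega⟩⟩, hinfρ⟩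

theorem card_bot : (⊥ : YoungDiagram).card = 0 := rfl


end Stmt9

open Finset Stmt9

/-- For a Young diagram `λ` with `n` boxes, the numbers of standard Young
tableaux satisfy `Σ_{μ = λ + □} f μ = (n + 1) * f λ`. -/
theorem stmt9
    (below above : YoungDiagram → Finset YoungDiagram)
    (hbelow : ∀ ν μ, μ ∈ below ν ↔ μ ≤ ν ∧ ν.card = μ.card + 1)
    (habove : ∀ μ ν, ν ∈ above μ ↔ μ ≤ ν ∧ ν.card = μ.card + 1)
    (f : YoungDiagram → ℕ)
    (hf0 : f ⊥ = 1)
    (hf : ∀ ν, ν ≠ ⊥ → f ν = ∑ μ ∈ below ν, f μ) :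
    ∀ l : YoungDiagram, (∑ μ ∈ above l, f μ) = (l.card + 1) * f l := by
  have habove' : ∀ l, above l = (Af l).image (addBox l) := by
    intro l; ext μ
    rw [habove, above_char, Finset.mem_image]
  have hbelow' : ∀ l, below l = (Rf l).image (eraseBox l) := by
    intro l; ext ν
    rw [hbelow, below_char, Finset.mem_image]
  have hcardab : ∀ l, (above l).card = (below l).card + 1 := by
    intro l
    rw [habove' l, hbelow' l, Finset.card_image_of_injOn (addBox_injOn l),
      Finset.card_image_of_injOn (eraseBox_injOn l), card_Af]
  suffices H : ∀ n (l : YoungDiagram), l.card = n →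
      (∑ μ ∈ above l, f μ) = (l.card + 1) * f l by
    exact fun l => H l.card l rfl
  intro n
  induction n using Nat.strong_induction_on with
  | _ n IH =>
  intro l hln
  subst hln
  have step1 : ∑ μ ∈ above l, f μ
      = (above l).card * f l + ∑ μ ∈ above l, ∑ ν ∈ (below μ).erase l, f ν := by
    have h1 : ∀ μ ∈ above l, f μ = f l + ∑ ν ∈ (below μ).erase l, f ν := by
      intro μ hμ
      rw [habove] at hμ
      have hμbot : μ ≠ ⊥ := by
        intro h
        rw [h, card_bot] at hμ
        omega
      rw [hf μ hμbot, ← Finset.add_sum_erase _ f ((hbelow μ l).mpr hμ)]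
    rw [Finset.sum_congr rfl h1, Finset.sum_add_distrib, Finset.sum_const, smul_eq_mul]
  have key : (∑ μ ∈ above l, ∑ ν ∈ (below μ).erase l, f ν)
      = ∑ ρ ∈ below l, ∑ ν ∈ (above ρ).erase l, f ν := by
    rw [Finset.sum_sigma', Finset.sum_sigma']
    refine Finset.sum_nbij' (fun p => ⟨l ⊓ p.2, p.2⟩) (fun p => ⟨l ⊔ p.2, p.2⟩) ?_ ?_ ?_ ?_ ?_
    · rintro ⟨μ, ν⟩ hp
      rw [Finset.mem_sigma, Finset.mem_erase, hbelow, habove] at hp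
      obtain ⟨⟨hμ1, hμ2⟩, hνl, hν1, hν2⟩ := hp
      obtain ⟨⟨ha, hb⟩, _⟩ := pairF hμ1 hμ2 hν1 hν2 hνl
      rw [Finset.mem_sigma, Finset.mem_erase, hbelow, habove]
      exact ⟨ha, hνl, hb⟩
    · rintro ⟨ρ, ν⟩ hp
      rw [Finset.mem_sigma, Finset.mem_erase, hbelow, habove] at hp
      obtain ⟨⟨hρ1, hρ2⟩, hνl, hν1, hν2⟩ := hp
      obtain ⟨⟨ha, hb⟩, _⟩ := pairB hρ1 hρ2 hν1 hν2 hνl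
      rw [Finset.mem_sigma, Finset.mem_erase, hbelow, habove]
      exact ⟨ha, hνl, hb⟩
    · rintro ⟨μ, ν⟩ hp
      rw [Finset.mem_sigma, Finset.mem_erase, hbelow, habove] at hp
      obtain ⟨⟨hμ1, hμ2⟩, hνl, hν1, hν2⟩ := hp
      obtain ⟨_, hsup⟩ := pairF hμ1 hμ2 hν1 hν2 hνl
      show (⟨l ⊔ ν, ν⟩ : Σ _ : YoungDiagram, YoungDiagram) = ⟨μ, ν⟩
      rw [hsup]
    · rintro ⟨ρ, ν⟩ hp
      rw [Finset.mem_sigma, Finset.mem_erase, hbelow, habove] at hp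
      obtain ⟨⟨hρ1, hρ2⟩, hνl, hν1, hν2⟩ := hp
      obtain ⟨_, hinf⟩ := pairB hρ1 hρ2 hν1 hν2 hνl
      show (⟨l ⊓ ν, ν⟩ : Σ _ : YoungDiagram, YoungDiagram) = ⟨ρ, ν⟩
      rw [hinf]
    · rintro ⟨μ, ν⟩ _
      rfl
  have step2 : ∑ ρ ∈ below l, (l.card * f ρ)
      = (below l).card * f l + ∑ ρ ∈ below l, ∑ ν ∈ (above ρ).erase l, f ν := by
    have h2 : ∀ ρ ∈ below l, l.card * f ρ = f l + ∑ ν ∈ (above ρ).erase l, f ν := by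
      intro ρ hρ
      rw [hbelow] at hρ
      have hmem : l ∈ above ρ := (habove ρ l).mpr ⟨hρ.1, hρ.2⟩
      have hIH : ∑ ν ∈ above ρ, f ν = (ρ.card + 1) * f ρ := IH ρ.card (by omega) ρ rfl
      rw [← Finset.add_sum_erase _ f hmem] at hIH
      rw [hρ.2]
      exact hIH.symm
    rw [Finset.sum_congr rfl h2, Finset.sum_add_distrib, Finset.sum_const, smul_eq_mul]
  have hsum_below : ∑ ρ ∈ below l, l.card * f ρ = l.card * f l := by
    rw [← Finset.mul_sum]
    by_cases hl : l = ⊥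
    · subst hl; rw [card_bot]; simp
    · rw [← hf l hl]
  rw [key] at step1
  have h2 : l.card * f l = (below l).card * f l
      + ∑ ρ ∈ below l, ∑ ν ∈ (above ρ).erase l, f ν := by
    rw [← hsum_below, step2]
  rw [step1, hcardab l]
  have e1 : ((below l).card + 1) * f l = (below l).card * f l + f l := by ring
  have e2 : (l.card + 1) * f l = l.card * f l + f l := by ring
  rw [e1, e2, h2]
  ring
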